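/- If k, m, n are positive integers with n > m and P_k = F_m · F_n, then |(5/(2√2)) · γ^k · α^{−(m+n)} − 1| < 6/α^{2m}. -/

import Mathlib

/-- The Pell sequence: P 0 = 0, P 1 = 1, P (n+2) = 2 * P (n+1) + P n. -/
def pell : ℕ → ℕ
  | 0 => 0
  | 1 => 1
  | n + 2 => 2 * pell (n + 1) + pell n

open Real

lemma pell_binet (k : ℕ) :
    (pell k : ℝ) = ((1 + Real.sqrt 2) ^ k - (1 - Real.sqrt 2) ^ k) / (2 * Real.sqrt 2) := by
  have h2 : Real.sqrt 2 ^ 2 = 2 := Real.sq_sqrt (by norm_num)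
  have hne : Real.sqrt 2 ≠ 0 := by positivity
  induction k using Nat.twoStepInduction with
  | zero => simp [pell]
  | one => simp [pell]; field_simp; ring
  | more n ih1 ih2 =>
    have hg : (1 + Real.sqrt 2) ^ (n + 2) = 2 * (1 + Real.sqrt 2) ^ (n + 1) + (1 + Real.sqrt 2) ^ n := by
      have : (1 + Real.sqrt 2) ^ 2 = 2 * (1 + Real.sqrt 2) + 1 := by nlinarith [h2]
      calc (1 + Real.sqrt 2) ^ (n + 2) = (1 + Real.sqrt 2) ^ n * ((1 + Real.sqrt 2) ^ 2) := by ring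
      _ = (1 + Real.sqrt 2) ^ n * (2 * (1 + Real.sqrt 2) + 1) := by rw [this]
      _ = _ := by ring
    have hd : (1 - Real.sqrt 2) ^ (n + 2) = 2 * (1 - Real.sqrt 2) ^ (n + 1) + (1 - Real.sqrt 2) ^ n := by
      have : (1 - Real.sqrt 2) ^ 2 = 2 * (1 - Real.sqrt 2) + 1 := by nlinarith [h2]
      calc (1 - Real.sqrt 2) ^ (n + 2) = (1 - Real.sqrt 2) ^ n * ((1 - Real.sqrt 2) ^ 2) := by ring
      _ = (1 - Real.sqrt 2) ^ n * (2 * (1 - Real.sqrt 2) + 1) := by rw [this]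
      _ = _ := by ring
    show ((2 * pell (n + 1) + pell n : ℕ) : ℝ) = _
    push_cast
    rw [ih1, ih2, hg, hd]
    ring

set_option maxHeartbeats 2000000 in
lemma aux_bound (gk dk am bm an bn : ℝ) (ham : 1 < am) (hman : am ≤ an)
    (hbm : |bm| * am = 1) (hbn : |bn| * an = 1) (hdk : |dk| ≤ 1)
    (e0 : (gk - dk) / (2 * Real.sqrt 2)
        = (am - bm) / Real.sqrt 5 * ((an - bn) / Real.sqrt 5)) :
    |5 / (2 * Real.sqrt 2) * gk * (am * an)⁻¹ - 1| < 6 / am ^ 2 := by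
  have h2 : Real.sqrt 2 ^ 2 = 2 := Real.sq_sqrt (by norm_num)
  have h5 : Real.sqrt 5 ^ 2 = 5 := Real.sq_sqrt (by norm_num)
  have hs2 : (0:ℝ) < Real.sqrt 2 := by positivity
  have hs5 : (0:ℝ) < Real.sqrt 5 := by positivity
  have hs2gt : (1:ℝ) < Real.sqrt 2 := by nlinarith
  have hs2lt : Real.sqrt 2 < 3/2 := by nlinarith
  have ham0 : (0:ℝ) < am := lt_trans one_pos ham
  have han0 : (0:ℝ) < an := ham0.trans_le hman
  have c0 : (0:ℝ) ≤ 2 * Real.sqrt 2 := by positivity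
  have key : 5 * gk - 2 * Real.sqrt 2 * (am * an)
      = 5 * dk - 2 * Real.sqrt 2 * (am * bn) - 2 * Real.sqrt 2 * (an * bm)
        + 2 * Real.sqrt 2 * (bm * bn) := by
    field_simp at e0
    linear_combination e0 - (gk - dk) * h5
  have hden : (0:ℝ) < 2 * Real.sqrt 2 * (am * an) :=
    mul_pos (by positivity) (mul_pos ham0 han0)
  have hL : 5 / (2 * Real.sqrt 2) * gk * (am * an)⁻¹ - 1
      = (5 * dk - 2 * Real.sqrt 2 * (am * bn) - 2 * Real.sqrt 2 * (an * bm)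
          + 2 * Real.sqrt 2 * (bm * bn)) / (2 * Real.sqrt 2 * (am * an)) := by
    rw [eq_div_iff (ne_of_gt hden)]
    field_simp
    linear_combination key
  rw [hL, abs_div, abs_of_pos hden, div_lt_div_iff₀ hden (by positivity)]
  clear hL key e0
  have b1 := neg_abs_le bm
  have b2 := le_abs_self bm
  have b3 := neg_abs_le bn
  have b4 := le_abs_self bn
  have b5 := neg_abs_le dk
  have b6 := le_abs_self dk
  have b7 := abs_nonneg bm
  have b8 := abs_nonneg bn
  have htri : |5 * dk - 2 * Real.sqrt 2 * (am * bn) - 2 * Real.sqrt 2 * (an * bm)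
      + 2 * Real.sqrt 2 * (bm * bn)|
      ≤ 5 * |dk| + 2 * Real.sqrt 2 * (am * |bn|)
        + 2 * Real.sqrt 2 * (an * |bm|) + 2 * Real.sqrt 2 * (|bm| * |bn|) := by
    rw [abs_le]
    constructor <;>
      nlinarith [mul_le_mul_of_nonneg_left (mul_le_mul_of_nonneg_left b4 ham0.le) c0,
        mul_le_mul_of_nonneg_left (mul_le_mul_of_nonneg_left b3 ham0.le) c0,
        mul_le_mul_of_nonneg_left (mul_le_mul_of_nonneg_left b2 han0.le) c0,
        mul_le_mul_of_nonneg_left (mul_le_mul_of_nonneg_left b1 han0.le) c0,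
        mul_le_mul_of_nonneg_left (mul_le_mul_of_nonneg_left b4 b7) c0,
        mul_le_mul_of_nonneg_left (mul_le_mul_of_nonneg_left b3 b7) c0,
        mul_le_mul_of_nonneg_left (mul_le_mul_of_nonneg_right b2 b8) c0,
        mul_le_mul_of_nonneg_left (mul_le_mul_of_nonneg_right b1 b8) c0]
  have hub : an * |bm| * am ^ 2 = am * an := by linear_combination (am * an) * hbm
  have h1 : am * |bn| ≤ 1 := by
    calc am * |bn| ≤ an * |bn| := mul_le_mul_of_nonneg_right hman b8
      _ = 1 := by linear_combination hbn
  have han1 : (1:ℝ) < an := ham.trans_le hman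
  have hamn : am ^ 2 ≤ am * an := by rw [sq]; exact mul_le_mul_of_nonneg_left hman ham0.le
  have hone : (1:ℝ) ≤ am * an := by
    calc (1:ℝ) = 1 * 1 := by ring
      _ ≤ am * an := mul_le_mul ham.le han1.le zero_le_one ham0.le
  have hva : am * |bn| * am ^ 2 ≤ am * an := by
    nlinarith [mul_le_mul_of_nonneg_right h1 (sq_nonneg am)]
  have huv : |bm| * |bn| * am ^ 2 ≤ am * an := by
    have h2 : |bm| * |bn| * am ^ 2 = am * |bn| := by linear_combination (|bn| * am) * hbm
    linarith [h2]
  calc |5 * dk - 2 * Real.sqrt 2 * (am * bn) - 2 * Real.sqrt 2 * (an * bm)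
      + 2 * Real.sqrt 2 * (bm * bn)| * am ^ 2
      ≤ (5 * |dk| + 2 * Real.sqrt 2 * (am * |bn|)
        + 2 * Real.sqrt 2 * (an * |bm|) + 2 * Real.sqrt 2 * (|bm| * |bn|)) * am ^ 2 :=
        mul_le_mul_of_nonneg_right htri (sq_nonneg am)
    _ ≤ 5 * am ^ 2 + 2 * Real.sqrt 2 * (am * an) + 2 * Real.sqrt 2 * (am * an)
        + 2 * Real.sqrt 2 * (am * an) := by
        nlinarith [mul_le_mul_of_nonneg_left hva c0, mul_le_mul_of_nonneg_left huv c0,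
          mul_le_mul_of_nonneg_right hdk (sq_nonneg am), hub, abs_nonneg dk]
    _ < 6 * (2 * Real.sqrt 2 * (am * an)) := by
        nlinarith [mul_le_mul_of_nonneg_right hman ham0.le, mul_pos ham0 han0, hs2gt]


set_option maxHeartbeats 1000000 in
/-- If k, m, n are positive integers with n > m and P_k = F_m · F_n, then
|(5/(2√2))·γ^k·α^{−(m+n)} − 1| < 6/α^{2m}, where α = (1+√5)/2 and γ = 1+√2. -/
theorem linear_form_PFF_1 (k m n : ℕ) (hk : 0 < k) (hm : 0 < m) (hmn : n > m)
    (h : pell k = Nat.fib m * Nat.fib n) :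
    |(5 / (2 * Real.sqrt 2)) * (1 + Real.sqrt 2) ^ k *
        ((1 + Real.sqrt 5) / 2) ^ (-((m : ℤ) + n)) - 1|
      < 6 / ((1 + Real.sqrt 5) / 2) ^ (2 * m) := by
  have h2 : Real.sqrt 2 ^ 2 = 2 := Real.sq_sqrt (by norm_num)
  have h5 : Real.sqrt 5 ^ 2 = 5 := Real.sq_sqrt (by norm_num)
  have hs2 : (0:ℝ) < Real.sqrt 2 := by positivity
  have hs5 : (0:ℝ) < Real.sqrt 5 := by positivity
  have hs2lt : Real.sqrt 2 < 2 := by nlinarith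
  have hs5gt : (2:ℝ) < Real.sqrt 5 := by nlinarith
  have hα1 : (1:ℝ) < (1 + Real.sqrt 5) / 2 := by nlinarith
  have hz : ((1 + Real.sqrt 5) / 2 : ℝ) ^ (-((m : ℤ) + n))
      = (((1 + Real.sqrt 5) / 2) ^ m * ((1 + Real.sqrt 5) / 2) ^ n)⁻¹ := by
    rw [show -((m : ℤ) + n) = -((m + n : ℕ) : ℤ) by push_cast; ring, zpow_neg,
      zpow_natCast, pow_add]
  have h2m : ((1 + Real.sqrt 5) / 2 : ℝ) ^ (2 * m) = (((1 + Real.sqrt 5) / 2) ^ m) ^ 2 := by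
    rw [two_mul, pow_add, sq]
  rw [hz, h2m]
  have habs : ∀ j : ℕ, |((1 - Real.sqrt 5) / 2 : ℝ) ^ j| * ((1 + Real.sqrt 5) / 2) ^ j = 1 := by
    intro j
    rw [abs_pow, ← mul_pow, abs_of_neg (show ((1 - Real.sqrt 5) / 2 : ℝ) < 0 by nlinarith),
      show (-((1 - Real.sqrt 5) / 2) * ((1 + Real.sqrt 5) / 2) : ℝ) = 1 by linear_combination h5 / 4,
      one_pow]
  refine aux_bound ((1 + Real.sqrt 2) ^ k) ((1 - Real.sqrt 2) ^ k) _
      (((1 - Real.sqrt 5) / 2) ^ m) _ (((1 - Real.sqrt 5) / 2) ^ n) ?_ ?_ (habs m) (habs n) ?_ ?_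
  · exact one_lt_pow₀ hα1 hm.ne'
  · exact pow_le_pow_right₀ hα1.le hmn.le
  · rw [abs_pow]
    apply pow_le_one₀ (abs_nonneg _)
    rw [abs_le]
    constructor <;> nlinarith
  · rw [← pell_binet, ← Real.coe_fib_eq, ← Real.coe_fib_eq]
    exact_mod_cast h
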